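/- For every $\epsilon > 0$ there exists a constant $C > 0$ such that for all $N \ge 1$ and all $w \ge \epsilon$, the jump of $\Psi_N$ at $w$ satisfies $0 \le \Psi_N(w) - \Psi_N(w-) \le C/N$; moreover $\Psi_N$ is discontinuous at $w > 0$ only if $w\sqrt{2n}$ is a nonzero integer for some integer $1 \le n \le N$. -/

import Mathlib

open MeasureTheory ProbabilityTheory Filter

noncomputable section

/-- `D_N = ∑ X_i`. -/
def DN {Ω : Type*} (X : ℕ → Ω → ℝ) (N : ℕ) (ω : Ω) : ℝ := ∑ i ∈ Finset.range N, X i ω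

/-- `T_N = ∑ X_i²`. -/
def TN {Ω : Type*} (X : ℕ → Ω → ℝ) (N : ℕ) (ω : Ω) : ℝ := ∑ i ∈ Finset.range N, (X i ω) ^ 2

/-- `W_N = D_N / √T_N` if `T_N > 0`, else `0`. -/
def WN {Ω : Type*} (X : ℕ → Ω → ℝ) (N : ℕ) (ω : Ω) : ℝ :=
  if 0 < TN X N ω then DN X N ω / Real.sqrt (TN X N ω) else 0

/-- The standard normal density `φ`. -/
def stdPhi (x : ℝ) : ℝ := Real.exp (-x ^ 2 / 2) / Real.sqrt (2 * Real.pi)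

/-- The standard normal distribution function `Φ`. -/
def stdCDF (x : ℝ) : ℝ := ∫ t in Set.Iic x, stdPhi t

/-- The oscillatory term `Λ_N(w)`. -/
def Lambda (N : ℕ) (w : ℝ) : ℝ :=
  -Real.sqrt (3 / 2) * stdPhi w *
    ∑ n ∈ Finset.range (N + 1),
      3 / Real.sqrt (Real.pi * N) * Real.exp (-(9 / N) * ((n : ℝ) - N / 3) ^ 2) *
        (Int.fract (w * Real.sqrt (2 * n)) - 1 / 2)

/-- The expansion `Ψ_N`: for `w ≥ 0` it is `Φ(w) + N^{-1/2} Λ_N(w)`, and for `w > 0` one sets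
`Ψ_N(-w) = 1 - Ψ_N(w-)`, where `Ψ_N(w-)` denotes the left limit at `w`. -/
def Psi (N : ℕ) (w : ℝ) : ℝ :=
  if 0 ≤ w then stdCDF w + Lambda N w / Real.sqrt N
  else 1 - Function.leftLim (fun x ↦ stdCDF x + Lambda N x / Real.sqrt N) (-w)



open scoped Classical

lemma sum_pow_le {r : ℝ} (hr0 : 0 ≤ r) (hr1 : r < 1) (T : Finset ℕ) :
    ∑ v ∈ T, r ^ v ≤ 1 / (1 - r) := by
  have h := (summable_geometric_of_lt_one hr0 hr1).sum_le_tsum T (fun i _ => by positivity)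
  rwa [tsum_geometric_of_lt_one hr0 hr1, inv_eq_one_div] at h

lemma sum_exp_bound {c t : ℝ} (hc : 0 < c) (K : Finset ℤ) :
    ∑ k ∈ K, Real.exp (-c * ((k : ℝ) - t) ^ 2) ≤ 2 * (1 + 1 / c) := by
  set r := Real.exp (-c) with hr
  have hr0 : 0 ≤ r := Real.exp_nonneg _
  have hr1 : r < 1 := by
    rw [hr, Real.exp_lt_one_iff]; linarith
  have key : ∀ k : ℤ, ∀ m : ℕ, (m : ℝ) ≤ |(k : ℝ) - t| →
      Real.exp (-c * ((k : ℝ) - t) ^ 2) ≤ r ^ m := by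
    intro k m hm
    rw [hr, ← Real.exp_nat_mul]
    apply Real.exp_le_exp.2
    have h1 : (m : ℝ) ^ 2 ≤ ((k : ℝ) - t) ^ 2 := by
      have := abs_nonneg ((k : ℝ) - t)
      nlinarith [sq_abs ((k:ℝ) - t)]
    rcases Nat.eq_zero_or_pos m with h0 | h0
    · subst h0; push_cast; nlinarith [sq_nonneg ((k:ℝ) - t)]
    · have h1m : (1:ℝ) ≤ (m : ℝ) := by exact_mod_cast h0
      have hmm : (m : ℝ) ≤ (m : ℝ) ^ 2 := by nlinarith
      nlinarith [mul_le_mul_of_nonneg_left h1 hc.le, mul_le_mul_of_nonneg_left hmm hc.le]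
  set F : ℤ → ℝ := fun k => Real.exp (-c * ((k : ℝ) - t) ^ 2) with hF
  have hFnn : ∀ k, 0 ≤ F k := fun k => Real.exp_nonneg _
  set b : ℤ := ⌊t⌋ with hb
  have hsplit : ∑ k ∈ K, F k = ∑ k ∈ K.filter (· ≤ b), F k + ∑ k ∈ K.filter (¬ · ≤ b), F k :=
    (Finset.sum_filter_add_sum_filter_not K _ F).symm
  have hbd1 : ∑ k ∈ K.filter (· ≤ b), F k ≤ 1 / (1 - r) := by
    have hinj : Set.InjOn (fun k : ℤ => (b - k).toNat) (K.filter (· ≤ b)) := by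
      intro x hx y hy hxy
      simp only [Finset.coe_filter, Set.mem_setOf_eq, Finset.mem_filter] at hx hy
      have hxy' : (b - x).toNat = (b - y).toNat := hxy
      obtain ⟨_, hx2⟩ := hx; obtain ⟨_, hy2⟩ := hy
      omega
    calc ∑ k ∈ K.filter (· ≤ b), F k ≤ ∑ k ∈ K.filter (· ≤ b), r ^ (b - k).toNat := by
          apply Finset.sum_le_sum
          intro k hk
          simp only [Finset.mem_filter] at hk
          obtain ⟨hk1, hk2⟩ := hk
          apply key
          have h0 : ((b - k).toNat : ℤ) = b - k := Int.toNat_of_nonneg (by omega)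
          have h1 : ((b - k).toNat : ℝ) = (b : ℝ) - k := by exact_mod_cast h0
          have h2 : (b : ℝ) ≤ t := Int.floor_le t
          rw [h1, abs_sub_comm, le_abs]
          left
          have : (k : ℝ) ≤ b := by exact_mod_cast hk2
          linarith
      _ = ∑ v ∈ (K.filter (· ≤ b)).image (fun k => (b - k).toNat), r ^ v := by
          rw [Finset.sum_image]
          intro x hx y hy hxy; exact hinj (by simpa using hx) (by simpa using hy) hxy
      _ ≤ 1 / (1 - r) := sum_pow_le hr0 hr1 _
  have hbd2 : ∑ k ∈ K.filter (¬ · ≤ b), F k ≤ 1 / (1 - r) := by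
    have hinj : Set.InjOn (fun k : ℤ => (k - b - 1).toNat) (K.filter (¬ · ≤ b)) := by
      intro x hx y hy hxy
      simp only [Finset.coe_filter, Set.mem_setOf_eq, Finset.mem_filter, not_le] at hx hy
      have hxy' : (x - b - 1).toNat = (y - b - 1).toNat := hxy
      obtain ⟨_, hx2⟩ := hx; obtain ⟨_, hy2⟩ := hy
      omega
    calc ∑ k ∈ K.filter (¬ · ≤ b), F k ≤ ∑ k ∈ K.filter (¬ · ≤ b), r ^ (k - b - 1).toNat := by
          apply Finset.sum_le_sum
          intro k hk
          simp only [Finset.mem_filter, not_le] at hk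
          obtain ⟨hk1, hk2⟩ := hk
          apply key
          have h0 : ((k - b - 1).toNat : ℤ) = k - b - 1 := Int.toNat_of_nonneg (by omega)
          have h1 : ((k - b - 1).toNat : ℝ) = (k : ℝ) - b - 1 := by exact_mod_cast h0
          have h2 : t < (b : ℝ) + 1 := Int.lt_floor_add_one t
          rw [h1, le_abs]
          left; linarith
      _ = ∑ v ∈ (K.filter (¬ · ≤ b)).image (fun k => (k - b - 1).toNat), r ^ v := by
          rw [Finset.sum_image]
          intro x hx y hy hxy; exact hinj (by simpa using hx) (by simpa using hy) hxy
      _ ≤ 1 / (1 - r) := sum_pow_le hr0 hr1 _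
  have hfinal : 1 / (1 - r) ≤ 1 + 1 / c := by
    have h1 : r ≤ 1 / (1 + c) := by
      rw [hr, Real.exp_neg, inv_eq_one_div]
      apply div_le_div_of_nonneg_left (by norm_num) (by positivity)
      linarith [Real.add_one_le_exp c]
    have h2 : c / (1 + c) ≤ 1 - r := by
      have : 1 - 1 / (1 + c) = c / (1 + c) := by field_simp; ring
      linarith
    have h3 : 0 < c / (1 + c) := by positivity
    calc 1 / (1 - r) ≤ 1 / (c / (1 + c)) := one_div_le_one_div_of_le h3 h2
      _ = 1 + 1 / c := by field_simp; ring
  rw [hsplit]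
  linarith

namespace St17


lemma stdPhi_integrable : MeasureTheory.Integrable stdPhi := by
  have h : stdPhi = fun x => (Real.sqrt (2 * Real.pi))⁻¹ * Real.exp (-(1/2 : ℝ) * x ^ 2) := by
    funext x
    rw [stdPhi, div_eq_inv_mul, show -x ^ 2 / 2 = -(1/2:ℝ) * x ^ 2 by ring]
  rw [h]
  exact (integrable_exp_neg_mul_sq (by norm_num)).const_mul _

lemma stdCDF_continuous : Continuous stdCDF := by
  have h : ∀ x, stdCDF x = stdCDF 0 + ∫ t in (0:ℝ)..x, stdPhi t := by
    intro x
    have := intervalIntegral.integral_Iic_sub_Iic (μ := volume) (f := stdPhi)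
      stdPhi_integrable.integrableOn stdPhi_integrable.integrableOn (a := 0) (b := x)
    simp only [stdCDF]
    linarith
  rw [funext h]
  exact continuous_const.add (stdPhi_integrable.continuous_primitive 0)

lemma stdPhi_continuous : Continuous stdPhi := by
  unfold stdPhi; fun_prop

lemma stdPhi_nonneg (x : ℝ) : 0 ≤ stdPhi x := by unfold stdPhi; positivity

/-- The coefficient in the sum defining `Lambda`. -/
def coef (N n : ℕ) : ℝ :=
  3 / Real.sqrt (Real.pi * N) * Real.exp (-(9 / (N : ℝ)) * ((n : ℝ) - N / 3) ^ 2)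

lemma coef_nonneg (N n : ℕ) : 0 ≤ coef N n := by unfold coef; positivity

lemma Lambda_eq (N : ℕ) (x : ℝ) : Lambda N x = -Real.sqrt (3/2) * stdPhi x *
    ∑ n ∈ Finset.range (N+1), coef N n * (Int.fract (x * Real.sqrt (2 * n)) - 1/2) := rfl

/-- Left limit of the fractional-part term. -/
def lfr (w : ℝ) (n : ℕ) : ℝ :=
  if n = 0 then 0
  else if ∃ k : ℤ, w * Real.sqrt (2 * n) = k then 1
  else Int.fract (w * Real.sqrt (2 * n))

lemma tendsto_fract_term {w : ℝ} (hw : 0 < w) (n : ℕ) :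
    Tendsto (fun x : ℝ => Int.fract (x * Real.sqrt (2 * n))) (nhdsWithin w (Set.Iio w))
      (nhds (lfr w n)) := by
  rcases Nat.eq_zero_or_pos n with h0 | hn
  · subst h0
    simp only [lfr, if_pos rfl, Nat.cast_zero, mul_zero, Real.sqrt_zero, Int.fract_zero]
    exact tendsto_const_nhds
  · have hs : 0 < Real.sqrt (2 * n) := Real.sqrt_pos.2 (by positivity)
    set s := Real.sqrt (2 * n) with hsdef
    have hmap : Tendsto (fun x : ℝ => x * s) (nhdsWithin w (Set.Iio w))
        (nhdsWithin (w * s) (Set.Iio (w * s))) := by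
      apply tendsto_nhdsWithin_of_tendsto_nhds_of_eventually_within
      · exact ((continuous_mul_right s).tendsto w).mono_left nhdsWithin_le_nhds
      · filter_upwards [self_mem_nhdsWithin] with x hx
        exact mul_lt_mul_of_pos_right hx hs
    rw [lfr, if_neg hn.ne']
    by_cases hk : ∃ k : ℤ, w * s = k
    · rw [if_pos hk]
      obtain ⟨k, hkk⟩ := hk
      have h1 : Tendsto Int.fract (nhdsWithin (w * s) (Set.Iio (w * s))) (nhds 1) := by
        rw [hkk]; exact tendsto_fract_left' k
      exact h1.comp hmap
    · rw [if_neg hk]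
      have hne : (w * s) ≠ (⌊w * s⌋ : ℝ) := fun h => hk ⟨⌊w * s⌋, h⟩
      exact (continuousAt_fract hne).tendsto.comp (hmap.mono_right nhdsWithin_le_nhds)

lemma tendsto_f_left (N : ℕ) {w : ℝ} (hw : 0 < w) :
    Tendsto (fun x => stdCDF x + Lambda N x / Real.sqrt N) (nhdsWithin w (Set.Iio w))
      (nhds (stdCDF w + (-Real.sqrt (3/2) * stdPhi w *
        ∑ n ∈ Finset.range (N+1), coef N n * (lfr w n - 1/2)) / Real.sqrt N)) := by
  apply Tendsto.add
  · exact (stdCDF_continuous.tendsto w).mono_left nhdsWithin_le_nhds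
  · apply Tendsto.div_const
    have hT : Tendsto (fun x => -Real.sqrt (3/2) * stdPhi x *
        ∑ n ∈ Finset.range (N+1), coef N n * (Int.fract (x * Real.sqrt (2 * n)) - 1/2))
        (nhdsWithin w (Set.Iio w))
        (nhds (-Real.sqrt (3/2) * stdPhi w *
          ∑ n ∈ Finset.range (N+1), coef N n * (lfr w n - 1/2))) := by
      apply Tendsto.mul
      · exact ((continuous_const.mul stdPhi_continuous).tendsto w).mono_left nhdsWithin_le_nhds
      · exact tendsto_finset_sum _ (fun n _ =>
          ((tendsto_fract_term hw n).sub_const _).const_mul _)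
    exact hT.congr (fun x => (Lambda_eq N x).symm)

lemma leftLim_Psi (N : ℕ) {w : ℝ} (hw : 0 < w) :
    Function.leftLim (Psi N) w = stdCDF w + (-Real.sqrt (3/2) * stdPhi w *
      ∑ n ∈ Finset.range (N+1), coef N n * (lfr w n - 1/2)) / Real.sqrt N := by
  apply leftLim_eq_of_tendsto
  apply (tendsto_f_left N hw).congr'
  filter_upwards [Ioo_mem_nhdsLT hw] with x hx
  rw [Psi, if_pos hx.1.le]

lemma jump_eq (N : ℕ) (hN : 1 ≤ N) {w : ℝ} (hw : 0 < w) :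
    Psi N w - Function.leftLim (Psi N) w =
      Real.sqrt (3/2) * stdPhi w / Real.sqrt N *
        ∑ n ∈ Finset.range (N+1),
          coef N n * (lfr w n - Int.fract (w * Real.sqrt (2 * n))) := by
  rw [leftLim_Psi N hw, Psi, if_pos hw.le, Lambda_eq]
  set a := ∑ n ∈ Finset.range (N+1), coef N n * (Int.fract (w * Real.sqrt (2 * n)) - 1/2)
    with ha
  set b := ∑ n ∈ Finset.range (N+1), coef N n * (lfr w n - 1/2) with hb
  set S := ∑ n ∈ Finset.range (N+1),
      coef N n * (lfr w n - Int.fract (w * Real.sqrt (2 * n))) with hS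
  have hab : a = b - S := by
    rw [ha, hb, hS, ← Finset.sum_sub_distrib]
    apply Finset.sum_congr rfl
    intro n _
    ring
  rw [hab]
  ring

lemma term_eq {w : ℝ} (n : ℕ) :
    lfr w n - Int.fract (w * Real.sqrt (2 * n)) =
      if n ≠ 0 ∧ ∃ k : ℤ, w * Real.sqrt (2 * n) = (k : ℝ) then 1 else 0 := by
  rcases Nat.eq_zero_or_pos n with h0 | hn
  · subst h0
    simp [lfr]
  · rw [lfr, if_neg hn.ne']
    by_cases hk : ∃ k : ℤ, w * Real.sqrt (2 * n) = (k : ℝ)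
    · obtain ⟨k, hkk⟩ := hk
      rw [if_pos ⟨k, hkk⟩, if_pos ⟨hn.ne', k, hkk⟩, hkk, Int.fract_intCast]
      norm_num
    · rw [if_neg hk, if_neg (by tauto)]
      ring

lemma sum_jump_eq (N : ℕ) (w : ℝ) :
    ∑ n ∈ Finset.range (N+1), coef N n * (lfr w n - Int.fract (w * Real.sqrt (2 * n))) =
      ∑ n ∈ (Finset.range (N+1)).filter
          (fun n : ℕ => n ≠ 0 ∧ ∃ k : ℤ, w * Real.sqrt (2 * (n:ℝ)) = (k : ℝ)), coef N n := by
  rw [Finset.sum_filter]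
  apply Finset.sum_congr rfl
  intro n _
  rw [term_eq]
  by_cases h : n ≠ 0 ∧ ∃ k : ℤ, w * Real.sqrt (2 * (n:ℝ)) = (k : ℝ)
  · rw [if_pos h, if_pos h, mul_one]
  · rw [if_neg h, if_neg h, mul_zero]

end St17

open St17 in
lemma filtered_sum_bound {N : ℕ} (hN : 1 ≤ N) {w : ℝ} (hw : 0 < w) :
    ∑ n ∈ (Finset.range (N+1)).filter
        (fun n : ℕ => n ≠ 0 ∧ ∃ k : ℤ, w * Real.sqrt (2 * (n:ℝ)) = (k : ℝ)),
      Real.exp (-(9 / (N : ℝ)) * ((n : ℝ) - N / 3) ^ 2)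
      ≤ 2 + 4 * w ^ 2 / 3 := by
  have hNpos : (0:ℝ) < N := by exact_mod_cast hN
  set c := 3 / (2 * w ^ 2) with hc
  have hcpos : 0 < c := by rw [hc]; positivity
  set t := Real.sqrt (2 * w ^ 2 * N / 3) with ht
  have ht0 : 0 ≤ t := Real.sqrt_nonneg _
  have ht2 : t ^ 2 = 2 * w ^ 2 * N / 3 := Real.sq_sqrt (by positivity)
  set S := (Finset.range (N+1)).filter
      (fun n : ℕ => n ≠ 0 ∧ ∃ k : ℤ, w * Real.sqrt (2 * (n:ℝ)) = (k : ℝ)) with hS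
  have hmem : ∀ n ∈ S, (↑⌊w * Real.sqrt (2 * (n:ℝ))⌋ : ℝ) = w * Real.sqrt (2 * (n:ℝ)) := by
    intro n hn
    simp only [hS, Finset.mem_filter, Finset.mem_range] at hn
    obtain ⟨-, -, k, hk⟩ := hn
    rw [hk, Int.floor_intCast]
  have hinj : Set.InjOn (fun n : ℕ => ⌊w * Real.sqrt (2 * (n:ℝ))⌋) ↑S := by
    intro x hx y hy hxy
    have hx3 := hmem x (by simpa using hx)
    have hy3 := hmem y (by simpa using hy)
    have h1 : w * Real.sqrt (2 * (x:ℝ)) = w * Real.sqrt (2 * (y:ℝ)) := by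
      rw [← hx3, ← hy3]
      exact_mod_cast hxy
    have h2 : Real.sqrt (2 * (x:ℝ)) = Real.sqrt (2 * (y:ℝ)) := mul_left_cancel₀ hw.ne' h1
    have h3 : 2 * (x:ℝ) = 2 * (y:ℝ) := by
      rw [← Real.sq_sqrt (by positivity : (0:ℝ) ≤ 2 * (x:ℝ)),
        ← Real.sq_sqrt (by positivity : (0:ℝ) ≤ 2 * (y:ℝ)), h2]
    have : (x:ℝ) = y := by linarith
    exact_mod_cast this
  have hptwise : ∀ n ∈ S, Real.exp (-(9 / (N : ℝ)) * ((n : ℝ) - N / 3) ^ 2)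
      ≤ Real.exp (-c * ((⌊w * Real.sqrt (2 * (n:ℝ))⌋ : ℝ) - t) ^ 2) := by
    intro n hn
    set u := (⌊w * Real.sqrt (2 * (n:ℝ))⌋ : ℝ) with hu
    have hun : u = w * Real.sqrt (2 * (n:ℝ)) := hmem n hn
    have hu0 : 0 ≤ u := by rw [hun]; positivity
    have hk2 : u ^ 2 = 2 * w ^ 2 * n := by
      rw [hun, mul_pow, Real.sq_sqrt (by positivity)]
      ring
    have hn3 : (n:ℝ) - N / 3 = (u ^ 2 - t ^ 2) / (2 * w ^ 2) := by
      rw [hk2, ht2]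
      field_simp
    have h1 : t ^ 2 ≤ (u + t) ^ 2 := by nlinarith
    have h2 : c ≤ 9 * (u + t) ^ 2 / (4 * w ^ 4 * N) := by
      rw [hc, div_le_div_iff₀ (by positivity) (by positivity)]
      have h1' := mul_le_mul_of_nonneg_right h1 (show (0:ℝ) ≤ 18 * w ^ 2 by positivity)
      rw [ht2] at h1'
      nlinarith [h1']
    apply Real.exp_le_exp.2
    have key : c * (u - t) ^ 2 ≤ 9 / (N : ℝ) * ((n : ℝ) - N / 3) ^ 2 := by
      calc c * (u - t) ^ 2 ≤ (9 * (u + t) ^ 2 / (4 * w ^ 4 * N)) * (u - t) ^ 2 :=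
            mul_le_mul_of_nonneg_right h2 (sq_nonneg _)
        _ = 9 / (N : ℝ) * ((u ^ 2 - t ^ 2) / (2 * w ^ 2)) ^ 2 := by
            field_simp
            ring
        _ = 9 / (N : ℝ) * ((n : ℝ) - N / 3) ^ 2 := by rw [← hn3]
    nlinarith [key]
  calc ∑ n ∈ S, Real.exp (-(9 / (N : ℝ)) * ((n : ℝ) - N / 3) ^ 2)
      ≤ ∑ n ∈ S, Real.exp (-c * ((⌊w * Real.sqrt (2 * (n:ℝ))⌋ : ℝ) - t) ^ 2) :=
        Finset.sum_le_sum hptwise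
    _ = ∑ k ∈ S.image (fun n : ℕ => ⌊w * Real.sqrt (2 * (n:ℝ))⌋),
          Real.exp (-c * ((k : ℝ) - t) ^ 2) := (Finset.sum_image
            (f := fun k : ℤ => Real.exp (-c * ((k : ℝ) - t) ^ 2))
            (g := fun n : ℕ => ⌊w * Real.sqrt (2 * (n:ℝ))⌋)
            (fun x hx y hy h => hinj (by simpa using hx) (by simpa using hy) h)).symm
    _ ≤ 2 * (1 + 1 / c) := sum_exp_bound hcpos _
    _ = 2 + 4 * w ^ 2 / 3 := by
        rw [hc]
        field_simp
        ring


theorem statement17 :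
    (∀ ε > (0 : ℝ), ∃ C > (0 : ℝ), ∀ N : ℕ, 1 ≤ N → ∀ w : ℝ, ε ≤ w →
        0 ≤ Psi N w - Function.leftLim (Psi N) w ∧
          Psi N w - Function.leftLim (Psi N) w ≤ C / N) ∧
      ∀ N : ℕ, 1 ≤ N → ∀ w : ℝ, 0 < w → ¬ ContinuousAt (Psi N) w →
        ∃ n : ℕ, 1 ≤ n ∧ n ≤ N ∧ ∃ k : ℤ, k ≠ 0 ∧ w * Real.sqrt (2 * n) = (k : ℝ) := by
  constructor
  · intro ε hε
    refine ⟨100, by norm_num, ?_⟩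
    intro N hN w hww
    have hw0 : 0 < w := lt_of_lt_of_le hε hww
    have hNpos : (0:ℝ) < N := by exact_mod_cast hN
    have hq : 0 < Real.sqrt N := Real.sqrt_pos.2 hNpos
    have hjump := St17.jump_eq N hN hw0
    rw [St17.sum_jump_eq] at hjump
    set S := (Finset.range (N+1)).filter
        (fun n : ℕ => n ≠ 0 ∧ ∃ k : ℤ, w * Real.sqrt (2 * (n:ℝ)) = (k : ℝ)) with hSdef
    have hA0 : 0 ≤ Real.sqrt (3/2) * stdPhi w / Real.sqrt N :=
      div_nonneg (mul_nonneg (Real.sqrt_nonneg _) (St17.stdPhi_nonneg w)) hq.le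
    have hS0 : 0 ≤ ∑ n ∈ S, St17.coef N n :=
      Finset.sum_nonneg (fun n _ => St17.coef_nonneg N n)
    constructor
    · rw [hjump]
      exact mul_nonneg hA0 hS0
    · rw [hjump]
      set E := Real.exp (-w ^ 2 / 2) with hE
      have hE0 : 0 ≤ E := Real.exp_nonneg _
      have hexp0 : ∀ n : ℕ, 0 ≤ Real.exp (-(9 / (N : ℝ)) * ((n : ℝ) - N / 3) ^ 2) :=
        fun n => Real.exp_nonneg _
      have hphi : stdPhi w ≤ E := by
        rw [stdPhi]
        apply div_le_self (Real.exp_nonneg _)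
        rw [show (1:ℝ) = Real.sqrt 1 by simp]
        exact Real.sqrt_le_sqrt (by nlinarith [Real.pi_gt_three])
      have h32 : Real.sqrt (3/2) ≤ 2 := by
        nlinarith [Real.sq_sqrt (show (0:ℝ) ≤ 3/2 by norm_num),
          Real.sqrt_nonneg (3/2 : ℝ)]
      have hA : Real.sqrt (3/2) * stdPhi w / Real.sqrt N ≤ 2 * E / Real.sqrt N := by
        have h := mul_le_mul h32 hphi (St17.stdPhi_nonneg w) (by norm_num)
        exact div_le_div_of_nonneg_right h hq.le
      have hsq : Real.sqrt N ≤ Real.sqrt (Real.pi * N) := by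
        apply Real.sqrt_le_sqrt
        nlinarith [Real.pi_gt_three]
      have hSb := filtered_sum_bound hN hw0
      have hSe : 0 ≤ ∑ n ∈ S,
          Real.exp (-(9 / (N : ℝ)) * ((n : ℝ) - N / 3) ^ 2) :=
        Finset.sum_nonneg (fun n _ => hexp0 n)
      have hcoefsum : ∑ n ∈ S, St17.coef N n
          = 3 / Real.sqrt (Real.pi * N) *
            ∑ n ∈ S, Real.exp (-(9 / (N : ℝ)) * ((n : ℝ) - N / 3) ^ 2) := by
        rw [Finset.mul_sum]
        exact Finset.sum_congr rfl fun n _ => rfl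
      have hB : ∑ n ∈ S, St17.coef N n ≤ 3 / Real.sqrt N * (2 + 4 * w ^ 2 / 3) := by
        rw [hcoefsum]
        apply mul_le_mul ?_ hSb hSe (by positivity)
        apply div_le_div_of_nonneg_left (by norm_num) hq hsq
      have hG0 : (0:ℝ) ≤ 2 + 4 * w ^ 2 / 3 := by positivity
      calc Real.sqrt (3/2) * stdPhi w / Real.sqrt N * ∑ n ∈ S, St17.coef N n
          ≤ 2 * E / Real.sqrt N * (3 / Real.sqrt N * (2 + 4 * w ^ 2 / 3)) :=
            mul_le_mul hA hB hS0 (by positivity)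
        _ = 6 * (E * (2 + 4 * w ^ 2 / 3)) / (Real.sqrt N * Real.sqrt N) := by ring
        _ = 6 * (E * (2 + 4 * w ^ 2 / 3)) / N := by
            rw [Real.mul_self_sqrt hNpos.le]
        _ ≤ 100 / N := by
            rw [div_le_div_iff₀ hNpos hNpos]
            have hE1 : E ≤ 1 := by
              rw [hE, Real.exp_le_one_iff]
              nlinarith
            have hE2 : w ^ 2 * E ≤ 2 := by
              have hEeq : E = (Real.exp (w ^ 2 / 2))⁻¹ := by
                rw [hE, ← Real.exp_neg]
                congr 1
                ring
              have hxe := Real.add_one_le_exp (w ^ 2 / 2)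
              have hep : 0 < Real.exp (w ^ 2 / 2) := Real.exp_pos _
              rw [hEeq]
              calc w ^ 2 * (Real.exp (w ^ 2 / 2))⁻¹
                  ≤ (2 * Real.exp (w ^ 2 / 2)) * (Real.exp (w ^ 2 / 2))⁻¹ := by
                    apply mul_le_mul_of_nonneg_right (by nlinarith) (by positivity)
                _ = 2 := by field_simp
            nlinarith
  · intro N hN w hw hcont
    by_contra hno
    push_neg at hno
    apply hcont
    have hev : (fun x => stdCDF x + Lambda N x / Real.sqrt N) =ᶠ[nhds w] Psi N := by
      filter_upwards [Ioi_mem_nhds hw] with x hx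
      rw [Psi, if_pos (le_of_lt hx)]
    apply ContinuousAt.congr ?_ hev
    apply ContinuousAt.add St17.stdCDF_continuous.continuousAt
    apply ContinuousAt.div_const
    have hsum : ContinuousAt (fun x => ∑ n ∈ Finset.range (N+1),
        St17.coef N n * (Int.fract (x * Real.sqrt (2 * (n:ℝ))) - 1/2)) w := by
      apply tendsto_finset_sum
      intro n hn
      rcases Nat.eq_zero_or_pos n with h0 | hn1
      · subst h0
        have hz : Real.sqrt (2 * ((0:ℕ):ℝ)) = 0 := by norm_num
        simp only [hz, mul_zero]
        exact continuousAt_const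
      · have hmem : n ≤ N := by
          simp only [Finset.mem_range] at hn
          omega
        have hpos : 0 < w * Real.sqrt (2 * (n:ℝ)) := by
          apply mul_pos hw
          apply Real.sqrt_pos.2
          have : (0:ℝ) < (n:ℝ) := by exact_mod_cast hn1
          linarith
        have hne : w * Real.sqrt (2 * (n:ℝ)) ≠ (⌊w * Real.sqrt (2 * (n:ℝ))⌋ : ℝ) := by
          intro heq
          have hk0 : ⌊w * Real.sqrt (2 * (n:ℝ))⌋ ≠ 0 := by
            intro h
            rw [h] at heq
            simp only [Int.cast_zero] at heq
            linarith
          exact hno n hn1 hmem _ hk0 heq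
        have hmulc : ContinuousAt (fun x : ℝ => x * Real.sqrt (2 * (n:ℝ))) w :=
          (continuous_mul_right _).continuousAt
        have hfr : ContinuousAt (fun x : ℝ => Int.fract (x * Real.sqrt (2 * (n:ℝ)))) w :=
          ContinuousAt.comp (g := Int.fract)
            (f := fun x : ℝ => x * Real.sqrt (2 * (n:ℝ))) (x := w) (continuousAt_fract hne) hmulc
        exact (hfr.sub continuousAt_const).const_mul _
    have : ContinuousAt (fun x => -Real.sqrt (3/2) * stdPhi x *
        ∑ n ∈ Finset.range (N+1),
          St17.coef N n * (Int.fract (x * Real.sqrt (2 * (n:ℝ))) - 1/2)) w :=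
      ((continuous_const.mul St17.stdPhi_continuous).continuousAt).mul hsum
    exact this.congr (Filter.Eventually.of_forall (fun x => (St17.Lambda_eq N x).symm))
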